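/- Let c : ℝⁿ → ℝ be twice continuously differentiable with ½|dᵀ∇²c(x)d| ≤ H‖d‖² for all x, d. If d satisfies c(x) + ⟨∇c(x), d⟩ = 0, then for any β ∈ [0,1], |c(x + βd)| ≤ (1-β)|c(x)| + β²H‖d‖². -/

import Mathlib

open scoped RealInnerProductSpace

open Set

lemma itdw_eq {g : ℝ → ℝ} (hg : ContDiff ℝ 2 g) {s : Set ℝ} (hs : UniqueDiffOn ℝ s)
    {t : ℝ} (ht : t ∈ s) {m : ℕ} (hm : (m : WithTop ℕ∞) ≤ 2) :
    iteratedDerivWithin m g s t = iteratedDeriv m g t := by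
  rw [iteratedDerivWithin_eq_iteratedFDerivWithin, iteratedDeriv_eq_iteratedFDeriv]
  congr 1
  have h := (contDiff_iff_ftaylorSeries.mp hg)
  rw [← hasFTaylorSeriesUpToOn_univ_iff] at h
  exact ((h.mono (subset_univ s)).eq_iteratedFDerivWithin_of_uniqueDiffOn hm hs ht).symm

/-- If `c` is C² with uniform Hessian bound `½|dᵀ∇²c(y)d| ≤ H‖d‖²` and `d` solves
the linearized equation `c(x) + Dc(x)[d] = 0`, then for `β ∈ [0,1]`:
`|c(x + β•d)| ≤ (1-β)|c(x)| + β²H‖d‖²`. -/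
theorem stmt5 {n : ℕ} (c : EuclideanSpace ℝ (Fin n) → ℝ)
    (hc : ContDiff ℝ 2 c) (H : ℝ) (hH0 : 0 ≤ H)
    (hH : ∀ (y v : EuclideanSpace ℝ (Fin n)),
      1 / 2 * |iteratedFDeriv ℝ 2 c y ![v, v]| ≤ H * ‖v‖ ^ 2)
    (x d : EuclideanSpace ℝ (Fin n))
    (hlin : c x + fderiv ℝ c x d = 0)
    (β : ℝ) (hβ0 : 0 ≤ β) (hβ1 : β ≤ 1) :
    |c (x + β • d)| ≤ (1 - β) * |c x| + β ^ 2 * H * ‖d‖ ^ 2 := by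
  set g : ℝ → ℝ := fun t => c (x + t • d) with hgdef
  have hL : ContDiff ℝ 2 (fun t : ℝ => x + t • d) :=
    contDiff_const.add (contDiff_id.smul contDiff_const)
  have hg : ContDiff ℝ 2 g := hc.comp hL
  have hLd : ∀ t : ℝ, HasDerivAt (fun t : ℝ => x + t • d) d t := by
    intro t
    simpa using ((hasDerivAt_id t).smul_const d).const_add x
  have hd1 : ∀ t : ℝ, HasDerivAt g (fderiv ℝ c (x + t • d) d) t := by
    intro t
    exact ((hc.differentiable (by norm_num) (x + t • d)).hasFDerivAt).comp_hasDerivAt t (hLd t)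
  have hderiv : deriv g = fun t => fderiv ℝ c (x + t • d) d := by
    funext t; exact (hd1 t).deriv
  have hcd : ContDiff ℝ 1 (fderiv ℝ c) := (contDiff_succ_iff_fderiv.mp hc).2.2
  have hd2 : ∀ t : ℝ, HasDerivAt (deriv g)
      (iteratedFDeriv ℝ 2 c (x + t • d) ![d, d]) t := by
    intro t
    rw [hderiv]
    have h1 : HasDerivAt (fun t : ℝ => fderiv ℝ c (x + t • d))
        (fderiv ℝ (fderiv ℝ c) (x + t • d) d) t :=
      ((hcd.differentiable one_ne_zero (x + t • d)).hasFDerivAt).comp_hasDerivAt t (hLd t)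
    have h2 := (ContinuousLinearMap.apply ℝ ℝ d).hasFDerivAt.comp_hasDerivAt t h1
    have he : iteratedFDeriv ℝ 2 c (x + t • d) ![d, d]
        = fderiv ℝ (fderiv ℝ c) (x + t • d) d d := by
      rw [iteratedFDeriv_two_apply]; simp
    rw [he]
    exact h2
  have hit2 : ∀ t : ℝ, iteratedDeriv 2 g t = iteratedFDeriv ℝ 2 c (x + t • d) ![d, d] := by
    intro t
    rw [iteratedDeriv_succ, iteratedDeriv_one]
    exact (hd2 t).deriv
  rcases eq_or_lt_of_le hβ0 with hβ | hβ
  · subst hβ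
    simp
  -- β > 0 case
  have hs : UniqueDiffOn ℝ (Icc (0 : ℝ) β) := uniqueDiffOn_Icc hβ
  have hf' : DifferentiableOn ℝ (iteratedDerivWithin 1 g (Icc 0 β)) (Ioo 0 β) := by
    apply DifferentiableOn.congr (f := deriv g)
    · intro t _
      exact ((hd2 t).differentiableAt).differentiableWithinAt
    · intro t ht
      rw [itdw_eq hg hs (Ioo_subset_Icc_self ht) (by norm_num), iteratedDeriv_one]
  obtain ⟨ξ, hξ, hTay⟩ := taylor_mean_remainder_lagrange (n := 1) hβ.ne
    (hg.contDiffOn.of_le (by norm_num)) (by rw [uIcc_of_le hβ0, uIoo_of_le hβ0]; exact hf')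
  rw [uIcc_of_le hβ0] at hTay
  rw [uIoo_of_le hβ0] at hξ
  have htval : taylorWithinEval g 1 (Icc 0 β) 0 β = (1 - β) * c x := by
    rw [taylor_within_apply]
    have h0mem : (0 : ℝ) ∈ Icc (0 : ℝ) β := ⟨le_rfl, hβ0⟩
    rw [Finset.sum_range_succ, Finset.sum_range_one]
    rw [itdw_eq hg hs h0mem (by norm_num : ((1:ℕ) : WithTop ℕ∞) ≤ 2), iteratedDeriv_one]
    rw [itdw_eq hg hs h0mem (by norm_num : ((0:ℕ) : WithTop ℕ∞) ≤ 2), iteratedDeriv_zero]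
    have hg0 : g 0 = c x := by simp [hgdef]
    have hdg0 : deriv g 0 = fderiv ℝ c x d := by
      rw [hderiv]; simp
    have : fderiv ℝ c x d = - c x := by linarith
    rw [hg0, hdg0, this]
    simp only [pow_zero, pow_one, smul_eq_mul, Nat.factorial, Nat.cast_one]
    ring
  rw [htval] at hTay
  rw [itdw_eq hg hs (Ioo_subset_Icc_self hξ) le_rfl, hit2] at hTay
  have hgβ : g β = c (x + β • d) := rfl
  set Q := iteratedFDeriv ℝ 2 c (x + ξ • d) ![d, d] with hQ
  have hQb := hH (x + ξ • d) d
  have : c (x + β • d) = (1 - β) * c x + Q * β ^ 2 / 2 := by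
    rw [← hgβ]
    norm_num [Nat.factorial] at hTay
    linarith [hTay]
  rw [this]
  calc |(1 - β) * c x + Q * β ^ 2 / 2| ≤ |(1 - β) * c x| + |Q * β ^ 2 / 2| := abs_add_le _ _
    _ = (1 - β) * |c x| + β ^ 2 * (1 / 2 * |Q|) := by
        rw [abs_mul, abs_of_nonneg (by linarith : (0:ℝ) ≤ 1 - β)]
        rw [abs_div, abs_mul]
        rw [abs_of_nonneg (by positivity : (0:ℝ) ≤ β ^ 2)]
        rw [abs_of_nonneg (by norm_num : (0:ℝ) ≤ 2)]
        ring
    _ ≤ (1 - β) * |c x| + β ^ 2 * (H * ‖d‖ ^ 2) := by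
        gcongr
        
    _ = (1 - β) * |c x| + β ^ 2 * H * ‖d‖ ^ 2 := by ring
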